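/- A quasi-metric m on a finite set V is weightable (i.e., there exists u : V → ℝ≥0 with m(i,j) + u(i) = m(j,i) + u(j) for all i,j) if and only if m satisfies the cyclic tour property: m(i,j) + m(j,k) + m(k,i) = m(i,k) + m(k,j) + m(j,i) for all i,j,k in V. -/
import Mathlib


/-- `m` is a quasi-metric: nonnegative, vanishing exactly on the diagonal, and
satisfying the oriented triangle inequality. -/
def IsQuasiMetric {V : Type*} (m : V → V → ℝ) : Prop :=
  (∀ x y, 0 ≤ m x y) ∧ (∀ x y, m x y = 0 ↔ x = y) ∧ ∀ x y z, m x y ≤ m x z + m z y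

/-- a quasi-metric on a finite set is weightable iff it satisfies
the cyclic tour property. -/
theorem stmt10 {V : Type*} [Fintype V] (m : V → V → ℝ) (hm : IsQuasiMetric m) :
    (∃ u : V → ℝ, (∀ i, 0 ≤ u i) ∧ ∀ i j, m i j + u i = m j i + u j) ↔
      ∀ i j k, m i j + m j k + m k i = m i k + m k j + m j i := by
  constructor
  · rintro ⟨u, _, hw⟩ i j k
    have h1 := hw i j
    have h2 := hw j k
    have h3 := hw k i
    linarith
  · intro hc
    by_cases h : Nonempty V
    · obtain ⟨v0⟩ := h
      have hne : (Finset.univ : Finset V).Nonempty := ⟨v0, Finset.mem_univ v0⟩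
      set C := Finset.univ.sup' hne (fun i => m i v0 - m v0 i) with hC
      refine ⟨fun i => (m v0 i - m i v0) + C, ?_, ?_⟩
      · intro i
        dsimp only
        have : m i v0 - m v0 i ≤ C := hC ▸ Finset.le_sup' (fun i => m i v0 - m v0 i) (Finset.mem_univ i)
        linarith
      · intro i j
        have := hc i j v0
        dsimp only
        linarith
    · exact ⟨fun _ => 0, fun i => (h ⟨i⟩).elim, fun i => (h ⟨i⟩).elim⟩
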